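/- Let ρ > ε > 0 and let S : ℝ² → ℝ be a measurable function that is bounded, i.e. |S(u)| ≤ M for all u ∈ ℝ² and some M ≥ 0. Define the ganglionic activation field 𝒮 : ℝ² → ℝ by 𝒮(p) = ∫_{B(p,ρ−ε)} S dA − ∫_{B(p,ρ)∖B(p,ρ−ε)} S dA. Then 𝒮 is Lipschitz continuous: there exists L ≥ 0 such that |𝒮(p) − 𝒮(q)| ≤ L·‖p − q‖ for all p, q ∈ ℝ². -/

import Mathlib

open MeasureTheory Metric

/-- **Lipschitz continuity of the ganglionic activation field.**
Let `ρ > ε > 0` and let `S : ℝ² → ℝ` be measurable and bounded by `M ≥ 0`.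
The center-surround field
`𝒮 p = ∫_{B(p,ρ−ε)} S − ∫_{B(p,ρ)∖B(p,ρ−ε)} S` is Lipschitz continuous. -/
theorem ganglionic_field_lipschitz
    (ρ ε : ℝ) (hε : 0 < ε) (hρ : ε < ρ)
    (S : EuclideanSpace ℝ (Fin 2) → ℝ) (hS : Measurable S)
    (M : ℝ) (hM : 0 ≤ M) (hbd : ∀ u, |S u| ≤ M) :
    ∃ L : ℝ, 0 ≤ L ∧ ∀ p q : EuclideanSpace ℝ (Fin 2),
      |((∫ u in closedBall p (ρ - ε), S u) -
          ∫ u in closedBall p ρ \ closedBall p (ρ - ε), S u) -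
        ((∫ u in closedBall q (ρ - ε), S u) -
          ∫ u in closedBall q ρ \ closedBall q (ρ - ε), S u)|
        ≤ L * ‖p - q‖ := by
  have hc' : True := trivial
  set c : ℝ := (volume (closedBall (0 : EuclideanSpace ℝ (Fin 2)) 1)).toReal with hc
  have hc0 : 0 ≤ c := ENNReal.toReal_nonneg
  have hρ0 : 0 < ρ := hε.trans hρ
  -- integrability on any closed ball
  have hint : ∀ (p : EuclideanSpace ℝ (Fin 2)) (r : ℝ), IntegrableOn S (closedBall p r) volume := by
    intro p r
    exact Measure.integrableOn_of_bounded (measure_closedBall_lt_top).ne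
      hS.aestronglyMeasurable (ae_of_all _ fun x => by
        rw [Real.norm_eq_abs]; exact hbd x)
  -- volume formula
  have hvol : ∀ (x : EuclideanSpace ℝ (Fin 2)) (s : ℝ), 0 ≤ s →
      (volume (closedBall x s)).toReal = s ^ 2 * c := by
    intro x s hs
    rw [Measure.addHaar_closedBall' volume x hs, ENNReal.toReal_mul,
      ENNReal.toReal_ofReal (by positivity)]
    congr 2
    simp [finrank_euclideanSpace_fin]
  -- single ball integral bound
  have hone : ∀ (x : EuclideanSpace ℝ (Fin 2)) (s : ℝ), 0 ≤ s →
      |∫ u in closedBall x s, S u| ≤ M * (s ^ 2 * c) := by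
    intro x s hs
    rw [← hvol x s hs, ← Real.norm_eq_abs]
    exact norm_setIntegral_le_of_norm_le_const (C := M) measure_closedBall_lt_top
      (fun u _ => by rw [Real.norm_eq_abs]; exact hbd u)
  -- key per-radius bound
  have key : ∀ r : ℝ, 0 ≤ r → r ≤ ρ → ∀ p q : EuclideanSpace ℝ (Fin 2),
      |(∫ u in closedBall p r, S u) - ∫ u in closedBall q r, S u|
        ≤ 6 * M * c * ρ * ‖p - q‖ := by
    intro r hr0 hrρ p q
    set d : ℝ := ‖p - q‖ with hd
    have hd0 : 0 ≤ d := norm_nonneg _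
    rcases le_or_gt d ρ with hcase | hcase
    · -- nearby case: symmetric difference bound
      have hdv : ∀ x y : EuclideanSpace ℝ (Fin 2), dist x y ≤ d →
          (volume (closedBall x r \ closedBall y r)).toReal ≤ (2 * r * d + d ^ 2) * c := by
        intro x y hxy
        have hsub : closedBall x r \ closedBall y r ⊆
            closedBall y (r + d) \ closedBall y r := by
          intro u hu
          have h1 : dist u x ≤ r := mem_closedBall.mp hu.1
          exact ⟨mem_closedBall.mpr ((dist_triangle u x y).trans (by linarith)), hu.2⟩
        have hballs : closedBall y r ⊆ closedBall y (r + d) :=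
          closedBall_subset_closedBall (by linarith)
        have hann : volume (closedBall y (r + d) \ closedBall y r)
            = volume (closedBall y (r + d)) - volume (closedBall y r) :=
          measure_diff hballs measurableSet_closedBall.nullMeasurableSet
            measure_closedBall_lt_top.ne
        have hfin : volume (closedBall y (r + d) \ closedBall y r) ≠ ⊤ :=
          ((measure_mono Set.diff_subset).trans_lt measure_closedBall_lt_top).ne
        calc (volume (closedBall x r \ closedBall y r)).toReal
            ≤ (volume (closedBall y (r + d) \ closedBall y r)).toReal :=
              ENNReal.toReal_mono hfin (measure_mono hsub)
          _ = (r + d) ^ 2 * c - r ^ 2 * c := by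
              rw [hann, ENNReal.toReal_sub_of_le (measure_mono hballs)
                measure_closedBall_lt_top.ne, hvol y (r + d) (by linarith), hvol y r hr0]
          _ = (2 * r * d + d ^ 2) * c := by ring
      have hdec : (∫ u in closedBall p r, S u) - ∫ u in closedBall q r, S u
          = (∫ u in closedBall p r \ closedBall q r, S u)
            - ∫ u in closedBall q r \ closedBall p r, S u := by
        have h1 := integral_inter_add_diff (μ := volume) (f := S)
          (s := closedBall p r) (t := closedBall q r) measurableSet_closedBall (hint p r)
        have h2 := integral_inter_add_diff (μ := volume) (f := S)
          (s := closedBall q r) (t := closedBall p r) measurableSet_closedBall (hint q r)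
        rw [Set.inter_comm] at h2
        linarith
      have hbnd : ∀ x y : EuclideanSpace ℝ (Fin 2), dist x y ≤ d →
          |∫ u in closedBall x r \ closedBall y r, S u| ≤ M * ((2 * r * d + d ^ 2) * c) := by
        intro x y hxy
        have := norm_setIntegral_le_of_norm_le_const (μ := volume) (f := S)
          (s := closedBall x r \ closedBall y r)
          ((measure_mono Set.diff_subset).trans_lt measure_closedBall_lt_top)
          (C := M) (fun u _ => by rw [Real.norm_eq_abs]; exact hbd u)
        rw [Real.norm_eq_abs, Measure.real] at this
        exact this.trans (by nlinarith [hdv x y hxy])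
      have hpq : dist p q ≤ d := by rw [dist_eq_norm]
      have hqp : dist q p ≤ d := by rw [dist_eq_norm, ← norm_neg]; simp [hd]
      have b1 := hbnd p q hpq
      have b2 := hbnd q p hqp
      rw [hdec]
      have habs : |(∫ u in closedBall p r \ closedBall q r, S u)
          - ∫ u in closedBall q r \ closedBall p r, S u|
          ≤ |∫ u in closedBall p r \ closedBall q r, S u|
            + |∫ u in closedBall q r \ closedBall p r, S u| := abs_sub _ _
      have harith : M * ((2 * r * d + d ^ 2) * c) + M * ((2 * r * d + d ^ 2) * c)
          ≤ 6 * M * c * ρ * d := by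
        nlinarith [mul_nonneg (mul_nonneg hM hc0) (mul_nonneg hd0 (sub_nonneg.mpr hrρ)),
          mul_nonneg (mul_nonneg hM hc0) (mul_nonneg hd0 (sub_nonneg.mpr hcase))]
      linarith
    · -- far case: trivial bound
      have b1 := hone p r hr0
      have b2 := hone q r hr0
      have habs : |(∫ u in closedBall p r, S u) - ∫ u in closedBall q r, S u|
          ≤ |∫ u in closedBall p r, S u| + |∫ u in closedBall q r, S u| := abs_sub _ _
      have hr2 : r ^ 2 ≤ ρ * d := by nlinarith
      have harith : M * (r ^ 2 * c) + M * (r ^ 2 * c) ≤ 6 * M * c * ρ * d := by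
        nlinarith [mul_le_mul_of_nonneg_left hr2 (mul_nonneg hM hc0),
          mul_nonneg (mul_nonneg (mul_nonneg hM hc0) hρ0.le) hd0]
      linarith
  refine ⟨18 * M * c * ρ, by positivity, fun p q => ?_⟩
  rw [integral_diff measurableSet_closedBall (hint p ρ)
      (closedBall_subset_closedBall (by linarith)),
    integral_diff measurableSet_closedBall (hint q ρ)
      (closedBall_subset_closedBall (by linarith))]
  have h1 := key (ρ - ε) (by linarith) (by linarith) p q
  have h2 := key ρ (le_of_lt hρ0) le_rfl p q
  rw [abs_le] at h1 h2 ⊢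
  constructor <;> [nlinarith [norm_nonneg (p - q)]; nlinarith [norm_nonneg (p - q)]]
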